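/- Define f_n(x_1,...,x_{2n}) = V^n(X^2, 1+abcdX^4; X+aX^2, 1−a(b+c)X^2−abcX^3). Then f_{n+1}(t, −t, x_1,...,x_{2n}) = (−1)^n · 2t(1−abt^2)(1−act^2) · Π_{i=1}^{2n}(t^2 − x_i^2) · Π_{i=1}^{2n}(1 − abcd t^2 x_i^2) · f_n(x_1,...,x_{2n}). -/
import Mathlib


open Finset

/-- `V^n(X,Y;A,B)`: the determinant of the `2n × 2n` matrix whose `(i,j)` entry
(0-indexed columns) is `a_i x_i^{n−1−j} y_i^j` for `j < n` and
`b_i x_i^{2n−1−j} y_i^{j−n}` for `n ≤ j < 2n`. -/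
def Vdet {R : Type*} [CommRing R] (n : ℕ) (x y a b : Fin (2 * n) → R) : R :=
  Matrix.det (Matrix.of fun i j : Fin (2 * n) =>
    if (j : ℕ) < n then a i * x i ^ (n - 1 - (j : ℕ)) * y i ^ (j : ℕ)
    else b i * x i ^ (2 * n - 1 - (j : ℕ)) * y i ^ ((j : ℕ) - n))

/-- `f_m(x₁,…,x_{2m}) = V^m(X², 1+abcdX⁴; X+aX², 1−a(b+c)X²−abcX³)`. -/
def fDet {R : Type*} [CommRing R] (a b c d : R) (m : ℕ) (x : Fin (2 * m) → R) : R :=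
  Vdet m (fun i => x i ^ 2) (fun i => 1 + a * b * c * d * x i ^ 4)
    (fun i => x i + a * x i ^ 2)
    (fun i => 1 - a * (b + c) * x i ^ 2 - a * b * c * x i ^ 3)

section helpers
variable {R : Type*} [CommRing R]

lemma myUpdateRow_comm {m : ℕ} (M : Matrix (Fin m) (Fin m) R) {i0 i1 : Fin m} (h : i0 ≠ i1)
    (u v : Fin m → R) :
    (M.updateRow i0 u).updateRow i1 v = (M.updateRow i1 v).updateRow i0 u := by
  ext i j
  rcases eq_or_ne i i1 with rfl | h1
  · rw [Matrix.updateRow_self, Matrix.updateRow_ne h.symm, Matrix.updateRow_self]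
  rcases eq_or_ne i i0 with rfl | h0
  · rw [Matrix.updateRow_ne h1, Matrix.updateRow_self, Matrix.updateRow_self]
  · rw [Matrix.updateRow_ne h1, Matrix.updateRow_ne h0, Matrix.updateRow_ne h0,
      Matrix.updateRow_ne h1]

/-- determinant after swapping two updated rows -/
lemma det_updateRow_swap {m : ℕ} (M : Matrix (Fin m) (Fin m) R) {i0 i1 : Fin m} (h : i0 ≠ i1)
    (u v : Fin m → R) :
    ((M.updateRow i0 u).updateRow i1 v).det = -((M.updateRow i0 v).updateRow i1 u).det := by
  have key : ((M.updateRow i0 v).updateRow i1 u).submatrix (Equiv.swap i0 i1) id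
      = (M.updateRow i0 u).updateRow i1 v := by
    ext i j
    rcases eq_or_ne i i0 with rfl | h0
    · simp [Matrix.submatrix_apply, Equiv.swap_apply_left, Matrix.updateRow_apply, h, h.symm]
    rcases eq_or_ne i i1 with rfl | h1
    · simp [Matrix.submatrix_apply, Equiv.swap_apply_right, Matrix.updateRow_apply, h, h.symm]
    · simp [Matrix.submatrix_apply, Equiv.swap_apply_of_ne_of_ne h0 h1,
        Matrix.updateRow_apply, h0, h1]
  rw [← key, Matrix.det_permute, Equiv.Perm.sign_swap h]
  simp

lemma det_rows_comb {m : ℕ} (M : Matrix (Fin m) (Fin m) R) {i0 i1 : Fin m} (h : i0 ≠ i1)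
    (s1 s2 : Fin m → R) (α β γ δ : R)
    (h0 : M i0 = fun j => α * s1 j + β * s2 j)
    (h1 : M i1 = fun j => γ * s1 j + δ * s2 j) :
    M.det = (α * δ - β * γ) * ((M.updateRow i0 s1).updateRow i1 s2).det := by
  have hM : M = ((M.updateRow i0 (α • s1 + β • s2)).updateRow i1 (γ • s1 + δ • s2)) := by
    ext i j
    rw [Matrix.updateRow_apply, Matrix.updateRow_apply]
    split_ifs with hi1 hi0
    · subst hi1; rw [h1]; simp
    · subst hi0; rw [h0]; simp
    · rfl
  nth_rewrite 1 [hM]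
  rw [myUpdateRow_comm _ h, Matrix.det_updateRow_add, Matrix.det_updateRow_smul,
    Matrix.det_updateRow_smul, myUpdateRow_comm _ h.symm, myUpdateRow_comm _ h.symm,
    Matrix.det_updateRow_add, Matrix.det_updateRow_smul, Matrix.det_updateRow_smul,
    Matrix.det_updateRow_add, Matrix.det_updateRow_smul, Matrix.det_updateRow_smul]
  have z1 : ((M.updateRow i0 s1).updateRow i1 s1).det = 0 :=
    Matrix.det_zero_of_row_eq h (by
      rw [Matrix.updateRow_ne h, Matrix.updateRow_self, Matrix.updateRow_self])
  have z2 : ((M.updateRow i0 s2).updateRow i1 s2).det = 0 :=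
    Matrix.det_zero_of_row_eq h (by
      rw [Matrix.updateRow_ne h, Matrix.updateRow_self, Matrix.updateRow_self])
  have sw : ((M.updateRow i0 s2).updateRow i1 s1).det
      = -((M.updateRow i0 s1).updateRow i1 s2).det := det_updateRow_swap M h s2 s1
  rw [z1, z2, sw]
  ring

end helpers

section main
variable {R : Type*} [CommRing R]

def fMat (a b c d : R) (m : ℕ) (x : Fin (2 * m) → R) :
    Matrix (Fin (2 * m)) (Fin (2 * m)) R :=
  Matrix.of fun i j =>
    if (j : ℕ) < m then
      (x i + a * x i ^ 2) * (x i ^ 2) ^ (m - 1 - (j : ℕ)) * (1 + a * b * c * d * x i ^ 4) ^ (j : ℕ)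
    else (1 - a * (b + c) * x i ^ 2 - a * b * c * x i ^ 3) * (x i ^ 2) ^ (2 * m - 1 - (j : ℕ)) *
      (1 + a * b * c * d * x i ^ 4) ^ ((j : ℕ) - m)

lemma fDet_eq (a b c d : R) (m : ℕ) (x : Fin (2 * m) → R) :
    fDet a b c d m x = (fMat a b c d m x).det := rfl

def rowS1 (t T : R) (n : ℕ) : Fin (2 * (n + 1)) → R := fun j =>
  if (j : ℕ) < n + 1 then (t ^ 2) ^ (n + 1 - 1 - (j : ℕ)) * T ^ (j : ℕ) else 0

def rowS2 (t T : R) (n : ℕ) : Fin (2 * (n + 1)) → R := fun j =>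
  if (j : ℕ) < n + 1 then 0
  else (t ^ 2) ^ (2 * (n + 1) - 1 - (j : ℕ)) * T ^ ((j : ℕ) - (n + 1))

def M1mat (a b c d t : R) (n : ℕ) (x : Fin (2 * n) → R) :
    Matrix (Fin (2 * (n + 1))) (Fin (2 * (n + 1))) R :=
  ((fMat a b c d (n + 1) (Fin.cons t (Fin.cons (-t) x))).updateRow 0
      (rowS1 t (1 + a * b * c * d * t ^ 4) n)).updateRow 1
      (rowS2 t (1 + a * b * c * d * t ^ 4) n)

-- tests
example (a t : R) (n : ℕ) (x : Fin (2 * n) → R) :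
    (Fin.cons t (Fin.cons (-t) x) : Fin (2 * (n + 1)) → R) 0 = t := rfl
example (a t : R) (n : ℕ) (x : Fin (2 * n) → R) :
    (Fin.cons t (Fin.cons (-t) x) : Fin (2 * (n + 1)) → R) 1 = -t := rfl
example (n : ℕ) : ((0 : Fin (2 * (n + 1))) : ℕ) = 0 := rfl
example (n : ℕ) : ((1 : Fin (2 * (n + 1))) : ℕ) = 1 := rfl
end main

section step1
variable {R : Type*} [CommRing R]

lemma step1 (a b c d t : R) (n : ℕ) (x : Fin (2 * n) → R) :
    fDet a b c d (n + 1) (Fin.cons t (Fin.cons (-t) x)) =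
      2 * t * (1 - a * b * t ^ 2) * (1 - a * c * t ^ 2) * (M1mat a b c d t n x).det := by
  rw [fDet_eq]
  have h01 : (0 : Fin (2 * (n + 1))) ≠ 1 := by
    intro h
    have := congrArg Fin.val h
    simp at this
  rw [det_rows_comb _ h01 (rowS1 t (1 + a * b * c * d * t ^ 4) n)
      (rowS2 t (1 + a * b * c * d * t ^ 4) n)
      (t + a * t ^ 2) (1 - a * (b + c) * t ^ 2 - a * b * c * t ^ 3)
      (-t + a * t ^ 2) (1 - a * (b + c) * t ^ 2 + a * b * c * t ^ 3) ?_ ?_]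
  · rw [show (t + a * t ^ 2) * (1 - a * (b + c) * t ^ 2 + a * b * c * t ^ 3) -
        (1 - a * (b + c) * t ^ 2 - a * b * c * t ^ 3) * (-t + a * t ^ 2) =
        2 * t * (1 - a * b * t ^ 2) * (1 - a * c * t ^ 2) by ring]
    rfl
  · funext j
    show (if (j : ℕ) < n + 1 then
        (t + a * t ^ 2) * (t ^ 2) ^ (n + 1 - 1 - (j : ℕ)) *
          (1 + a * b * c * d * t ^ 4) ^ (j : ℕ)
      else (1 - a * (b + c) * t ^ 2 - a * b * c * t ^ 3) *
          (t ^ 2) ^ (2 * (n + 1) - 1 - (j : ℕ)) *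
          (1 + a * b * c * d * t ^ 4) ^ ((j : ℕ) - (n + 1))) = _
    rw [rowS1, rowS2]
    split_ifs with hj
    · ring
    · ring
  · funext j
    show (if (j : ℕ) < n + 1 then
        (-t + a * (-t) ^ 2) * ((-t) ^ 2) ^ (n + 1 - 1 - (j : ℕ)) *
          (1 + a * b * c * d * (-t) ^ 4) ^ (j : ℕ)
      else (1 - a * (b + c) * (-t) ^ 2 - a * b * c * (-t) ^ 3) *
          ((-t) ^ 2) ^ (2 * (n + 1) - 1 - (j : ℕ)) *
          (1 + a * b * c * d * (-t) ^ 4) ^ ((j : ℕ) - (n + 1))) = _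
    rw [rowS1, rowS2, show ((-t : R)) ^ 2 = t ^ 2 by ring, show ((-t : R)) ^ 4 = t ^ 4 by ring]
    split_ifs with hj
    · ring
    · ring
end step1

section stepU
variable {R : Type*} [CommRing R]

def Umat (t T : R) (n : ℕ) : Matrix (Fin (2 * (n + 1))) (Fin (2 * (n + 1))) R :=
  Matrix.of fun k j =>
    (if k = j then (if (j : ℕ) = n ∨ (j : ℕ) = 2 * n + 1 then 1 else T) else 0) +
    (if (k : ℕ) = (j : ℕ) + 1 ∧ ¬((j : ℕ) = n ∨ (j : ℕ) = 2 * n + 1) then -t ^ 2 else 0)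

lemma det_Umat (t T : R) (n : ℕ) : (Umat t T n).det = T ^ (2 * n) := by
  rw [Matrix.det_of_lowerTriangular _ ?ht]
  case ht =>
    intro i j hij
    have hij' : (i : ℕ) < (j : ℕ) := hij
    show (if i = j then _ else _) + _ = (0 : R)
    rw [if_neg (by intro h; subst h; omega), if_neg (by intro h; omega), add_zero]
  have hdiag : ∀ j : Fin (2 * (n + 1)), Umat t T n j j =
      if (j : ℕ) = n ∨ (j : ℕ) = 2 * n + 1 then 1 else T := by
    intro j
    unfold Umat
    simp only [Matrix.of_apply, if_pos rfl, if_true,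
      if_neg (show ¬((j : ℕ) = (j : ℕ) + 1 ∧ ¬((j : ℕ) = n ∨ (j : ℕ) = 2 * n + 1)) from
        by omega), add_zero]
  rw [Finset.prod_congr rfl (fun j _ => hdiag j), Finset.prod_ite, Finset.prod_const,
    Finset.prod_const, one_pow, one_mul]
  congr 1
  have hfil : Finset.univ.filter (fun j : Fin (2 * (n + 1)) => (j : ℕ) = n ∨ (j : ℕ) = 2 * n + 1)
      = {(⟨n, by omega⟩ : Fin (2 * (n + 1))), ⟨2 * n + 1, by omega⟩} := by
    ext j
    simp only [Finset.mem_filter, Finset.mem_univ, true_and, Finset.mem_insert,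
      Finset.mem_singleton, Fin.ext_iff]
  have h2 : (Finset.univ.filter (fun j : Fin (2 * (n + 1)) =>
      (j : ℕ) = n ∨ (j : ℕ) = 2 * n + 1)).card = 2 := by
    rw [hfil, Finset.card_insert_of_notMem (by simp [Fin.ext_iff]; omega),
      Finset.card_singleton]
  have h3 := Finset.card_filter_add_card_filter_not
    (s := (Finset.univ : Finset (Fin (2 * (n + 1)))))
    (p := fun j => (j : ℕ) = n ∨ (j : ℕ) = 2 * n + 1)
  rw [Finset.card_univ, Fintype.card_fin] at h3
  omega
end stepU

section step3
variable {R : Type*} [CommRing R]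

def M2mat (a b c d t : R) (n : ℕ) (z : Fin (2 * (n + 1)) → R) :
    Matrix (Fin (2 * (n + 1))) (Fin (2 * (n + 1))) R :=
  Matrix.of fun i j =>
    if (i : ℕ) = 0 then (if (j : ℕ) = n then (1 + a * b * c * d * t ^ 4) ^ n else 0)
    else if (i : ℕ) = 1 then (if (j : ℕ) = 2 * n + 1 then (1 + a * b * c * d * t ^ 4) ^ n else 0)
    else
      if (j : ℕ) < n then
        (z i + a * z i ^ 2) * (z i ^ 2) ^ (n - 1 - (j : ℕ)) *
          (1 + a * b * c * d * z i ^ 4) ^ (j : ℕ) *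
          ((z i ^ 2 - t ^ 2) * (1 - a * b * c * d * t ^ 2 * z i ^ 2))
      else if (j : ℕ) = n then (z i + a * z i ^ 2) * (1 + a * b * c * d * z i ^ 4) ^ n
      else if (j : ℕ) = 2 * n + 1 then
        (1 - a * (b + c) * z i ^ 2 - a * b * c * z i ^ 3) * (1 + a * b * c * d * z i ^ 4) ^ n
      else
        (1 - a * (b + c) * z i ^ 2 - a * b * c * z i ^ 3) * (z i ^ 2) ^ (2 * n - (j : ℕ)) *
          (1 + a * b * c * d * z i ^ 4) ^ ((j : ℕ) - (n + 1)) *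
          ((z i ^ 2 - t ^ 2) * (1 - a * b * c * d * t ^ 2 * z i ^ 2))

lemma step3 (a b c d t : R) (n : ℕ) (x : Fin (2 * n) → R) :
    M1mat a b c d t n x * Umat t (1 + a * b * c * d * t ^ 4) n
      = M2mat a b c d t n (Fin.cons t (Fin.cons (-t) x)) := by
  ext i j
  have hjlt : (j : ℕ) < 2 * (n + 1) := j.isLt
  have hsum : (M1mat a b c d t n x * Umat t (1 + a * b * c * d * t ^ 4) n) i j
      = M1mat a b c d t n x i j *
          (if (j : ℕ) = n ∨ (j : ℕ) = 2 * n + 1 then 1 else (1 + a * b * c * d * t ^ 4))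
        + (if h : (j : ℕ) = n ∨ (j : ℕ) = 2 * n + 1 then 0
           else -(M1mat a b c d t n x i ⟨(j : ℕ) + 1, by omega⟩ * t ^ 2)) := by
    rw [Matrix.mul_apply]
    unfold Umat
    simp only [Matrix.of_apply, mul_add]
    rw [Finset.sum_add_distrib]
    congr 1
    · simp only [mul_ite, mul_zero]
      rw [Finset.sum_ite_eq' Finset.univ j, if_pos (Finset.mem_univ j)]
    · by_cases hj : (j : ℕ) = n ∨ (j : ℕ) = 2 * n + 1
      · rw [dif_pos hj]
        exact Finset.sum_eq_zero fun k _ => by rw [if_neg (by tauto), mul_zero]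
      · rw [dif_neg hj, Finset.sum_eq_single (⟨(j : ℕ) + 1, by omega⟩ : Fin (2 * (n + 1)))]
        · rw [if_pos ⟨rfl, hj⟩, mul_neg]
        · intro k _ hk
          rw [if_neg, mul_zero]
          intro hcon
          exact hk (Fin.ext hcon.1)
        · intro hmem; exact absurd (Finset.mem_univ _) hmem
  rw [hsum]
  show _ = M2mat a b c d t n (Fin.cons t (Fin.cons (-t) x)) i j
  unfold M2mat
  simp only [Matrix.of_apply]
  by_cases hi0 : (i : ℕ) = 0
  · have hi : i = (0 : Fin (2 * (n + 1))) := Fin.ext hi0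
    have hMi : ∀ k, M1mat a b c d t n x i k = rowS1 t (1 + a * b * c * d * t ^ 4) n k := by
      intro k
      unfold M1mat
      rw [hi, Matrix.updateRow_ne (by intro h; exact absurd (congrArg Fin.val h) (by simp)),
        Matrix.updateRow_self]
    rw [if_pos hi0, hMi]
    by_cases hjn : (j : ℕ) = n
    · rw [if_pos (Or.inl hjn), dif_pos (Or.inl hjn), if_pos hjn]
      unfold rowS1
      rw [if_pos (by omega), show n + 1 - 1 - (j : ℕ) = 0 by omega, pow_zero, one_mul, hjn,
        mul_one, add_zero]
    · rw [if_neg hjn]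
      by_cases hj1 : (j : ℕ) = 2 * n + 1
      · rw [if_pos (Or.inr hj1), dif_pos (Or.inr hj1), add_zero, mul_one]
        unfold rowS1
        rw [if_neg (by omega)]
      · rw [if_neg (by tauto), dif_neg (by tauto), hMi]
        unfold rowS1
        by_cases hjn' : (j : ℕ) < n
        · rw [if_pos (by omega), if_pos (show ((⟨(j : ℕ) + 1, by omega⟩ : Fin (2 * (n + 1))) : ℕ) < n + 1 by simp only [Fin.val_mk]; omega)]
          simp only [Fin.val_mk]
          rw [show n + 1 - 1 - (j : ℕ) = (n + 1 - 1 - ((j : ℕ) + 1)) + 1 by omega, pow_succ]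
          ring
        · rw [if_neg (by omega), if_neg (show ¬ ((⟨(j : ℕ) + 1, by omega⟩ : Fin (2 * (n + 1))) : ℕ) < n + 1 by simp only [Fin.val_mk]; omega)]
          ring
  · by_cases hi1 : (i : ℕ) = 1
    · have hi : i = (1 : Fin (2 * (n + 1))) := Fin.ext hi1
      have hMi : ∀ k, M1mat a b c d t n x i k = rowS2 t (1 + a * b * c * d * t ^ 4) n k := by
        intro k
        unfold M1mat
        rw [hi, Matrix.updateRow_self]
      rw [if_neg hi0, if_pos hi1, hMi]
      by_cases hjn : (j : ℕ) = n
      · rw [if_pos (Or.inl hjn), dif_pos (Or.inl hjn), if_neg (by omega)]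
        unfold rowS2
        rw [if_pos (by omega)]
        ring
      · by_cases hj1 : (j : ℕ) = 2 * n + 1
        · rw [if_pos (Or.inr hj1), dif_pos (Or.inr hj1), if_pos hj1, add_zero, mul_one]
          unfold rowS2
          rw [if_neg (by omega), show 2 * (n + 1) - 1 - (j : ℕ) = 0 by omega, pow_zero, one_mul,
            show (j : ℕ) - (n + 1) = n by omega]
        · rw [if_neg (by tauto), dif_neg (by tauto), hMi, if_neg hj1]
          unfold rowS2
          by_cases hjn' : (j : ℕ) < n + 1
          · rw [if_pos (by omega), if_pos (show ((⟨(j : ℕ) + 1, by omega⟩ : Fin (2 * (n + 1))) : ℕ) < n + 1 by simp only [Fin.val_mk]; omega)]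
            ring
          · rw [if_neg (by omega), if_neg (show ¬ ((⟨(j : ℕ) + 1, by omega⟩ : Fin (2 * (n + 1))) : ℕ) < n + 1 by simp only [Fin.val_mk]; omega)]
            simp only [Fin.val_mk]
            rw [show 2 * (n + 1) - 1 - (j : ℕ) = (2 * (n + 1) - 1 - ((j : ℕ) + 1)) + 1 by omega,
              pow_succ, show ((j : ℕ) + 1) - (n + 1) = ((j : ℕ) - (n + 1)) + 1 by omega, pow_succ]
            ring
    · have hMi : ∀ k, M1mat a b c d t n x i k
          = fMat a b c d (n + 1) (Fin.cons t (Fin.cons (-t) x)) i k := by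
        intro k
        unfold M1mat
        rw [Matrix.updateRow_ne (by intro h; exact hi1 (by rw [h]; rfl)),
          Matrix.updateRow_ne (by intro h; exact hi0 (by rw [h]; rfl))]
      rw [if_neg hi0, if_neg hi1]
      simp only [hMi]
      unfold fMat
      simp only [Matrix.of_apply, Fin.val_mk]
      by_cases hjn' : (j : ℕ) < n
      · rw [dif_neg (show ¬((j : ℕ) = n ∨ (j : ℕ) = 2 * n + 1) by omega),
          if_neg (show ¬((j : ℕ) = n ∨ (j : ℕ) = 2 * n + 1) by omega),
          if_pos (show (j : ℕ) < n + 1 by omega),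
          if_pos (show (j : ℕ) + 1 < n + 1 by omega),
          if_pos hjn',
          show n + 1 - 1 - (j : ℕ) = (n - 1 - (j : ℕ)) + 1 by omega, pow_succ,
          show n + 1 - 1 - ((j : ℕ) + 1) = n - 1 - (j : ℕ) by omega]
        ring
      · by_cases hjn : (j : ℕ) = n
        · rw [dif_pos (show (j : ℕ) = n ∨ (j : ℕ) = 2 * n + 1 from Or.inl hjn),
            if_pos (show (j : ℕ) = n ∨ (j : ℕ) = 2 * n + 1 from Or.inl hjn),
            if_pos (show (j : ℕ) < n + 1 by omega), if_neg hjn', if_pos hjn, hjn,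
            show n + 1 - 1 - n = 0 by omega, pow_zero]
          ring
        · by_cases hj1 : (j : ℕ) = 2 * n + 1
          · rw [dif_pos (show (j : ℕ) = n ∨ (j : ℕ) = 2 * n + 1 from Or.inr hj1),
              if_pos (show (j : ℕ) = n ∨ (j : ℕ) = 2 * n + 1 from Or.inr hj1),
              if_neg (show ¬(j : ℕ) < n + 1 by omega),
              if_neg hjn', if_neg hjn, if_pos hj1, hj1,
              show 2 * (n + 1) - 1 - (2 * n + 1) = 0 by omega, pow_zero,
              show 2 * n + 1 - (n + 1) = n by omega]
            ring
          · have hor : ¬((j : ℕ) = n ∨ (j : ℕ) = 2 * n + 1) := by omega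
            rw [dif_neg hor, if_neg hor,
              if_neg (show ¬(j : ℕ) < n + 1 by omega),
              if_neg (show ¬(j : ℕ) + 1 < n + 1 by omega),
              if_neg hjn', if_neg hjn, if_neg hj1,
              show 2 * (n + 1) - 1 - (j : ℕ) = (2 * n - (j : ℕ)) + 1 by omega, pow_succ,
              show 2 * (n + 1) - 1 - ((j : ℕ) + 1) = 2 * n - (j : ℕ) by omega,
              show (j : ℕ) + 1 - (n + 1) = ((j : ℕ) - (n + 1)) + 1 by omega, pow_succ]
            ring
end step3

section step4
variable {R : Type*} [CommRing R]

lemma det_single_row {m : ℕ} (A : Matrix (Fin (m + 1)) (Fin (m + 1)) R) (j0 : Fin (m + 1))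
    (c : R) (hA : ∀ j, A 0 j = if (j : ℕ) = (j0 : ℕ) then c else 0) :
    A.det = (-1) ^ (j0 : ℕ) * c * (A.submatrix Fin.succ j0.succAbove).det := by
  rw [Matrix.det_succ_row_zero, Finset.sum_eq_single j0]
  · rw [hA, if_pos rfl]
  · intro b _ hb
    rw [hA, if_neg (fun h => hb (Fin.ext h)), mul_zero, zero_mul]
  · intro h; exact absurd (Finset.mem_univ _) h

lemma step4 (a b c d t : R) (n : ℕ) (x : Fin (2 * n) → R) :
    (M2mat a b c d t n (Fin.cons t (Fin.cons (-t) x))).det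
      = (-1) ^ n * (1 + a * b * c * d * t ^ 4) ^ (2 * n) *
        ((∏ i : Fin (2 * n), ((x i ^ 2 - t ^ 2) * (1 - a * b * c * d * t ^ 2 * x i ^ 2))) *
          fDet a b c d n x) := by
  have hn : n < 2 * (n + 1) := by omega
  have h2n : 2 * n < 2 * n + 1 := by omega
  have hval1 : ∀ k : Fin (2 * n + 1),
      (((⟨n, hn⟩ : Fin (2 * (n + 1))).succAbove k : Fin (2 * (n + 1))) : ℕ)
        = if (k : ℕ) < n then (k : ℕ) else (k : ℕ) + 1 := by
    intro k
    simp [Fin.succAbove, Fin.lt_def, apply_ite (Fin.val)]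
  have hval2 : ∀ j : Fin (2 * n),
      (((⟨2 * n, h2n⟩ : Fin (2 * n + 1)).succAbove j : Fin (2 * n + 1)) : ℕ) = (j : ℕ) := by
    intro j
    simp [Fin.succAbove, Fin.lt_def, j.isLt]
  have h1 : ∀ j, M2mat a b c d t n (Fin.cons t (Fin.cons (-t) x)) 0 j
      = if (j : ℕ) = ((⟨n, hn⟩ : Fin (2 * (n + 1))) : ℕ) then (1 + a * b * c * d * t ^ 4) ^ n
        else 0 := by
    intro j
    unfold M2mat
    simp only [Matrix.of_apply]
    rw [if_pos (show ((0 : Fin (2 * (n + 1))) : ℕ) = 0 from rfl)]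
  rw [show (M2mat a b c d t n (Fin.cons t (Fin.cons (-t) x))).det
      = (-1) ^ n * (1 + a * b * c * d * t ^ 4) ^ n *
        ((M2mat a b c d t n (Fin.cons t (Fin.cons (-t) x))).submatrix Fin.succ
          (⟨n, hn⟩ : Fin (2 * (n + 1))).succAbove).det
      from det_single_row _ _ _ h1]
  have h2 : ∀ j : Fin (2 * n + 1),
      (M2mat a b c d t n (Fin.cons t (Fin.cons (-t) x))).submatrix Fin.succ
          (⟨n, hn⟩ : Fin (2 * (n + 1))).succAbove 0 j
        = if (j : ℕ) = ((⟨2 * n, h2n⟩ : Fin (2 * n + 1)) : ℕ)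
          then (1 + a * b * c * d * t ^ 4) ^ n else 0 := by
    intro j
    rw [Matrix.submatrix_apply]
    unfold M2mat
    simp only [Matrix.of_apply]
    rw [if_neg (show ¬((Fin.succ (0 : Fin (2 * n + 1)) : Fin (2 * (n + 1))) : ℕ) = 0
        from by simp),
      if_pos (show ((Fin.succ (0 : Fin (2 * n + 1)) : Fin (2 * (n + 1))) : ℕ) = 1 from rfl)]
    have hjlt := j.isLt
    by_cases hj : (j : ℕ) < n
    · rw [if_neg (show ¬((((⟨n, hn⟩ : Fin (2 * (n + 1))).succAbove j) : Fin (2 * (n + 1))) : ℕ)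
          = 2 * n + 1 from by rw [hval1, if_pos hj]; omega),
        if_neg (show ¬(j : ℕ) = ((⟨2 * n, h2n⟩ : Fin (2 * n + 1)) : ℕ) from by
          simp only [Fin.val_mk]; omega)]
    · by_cases hj2 : (j : ℕ) = 2 * n
      · rw [if_pos (show ((((⟨n, hn⟩ : Fin (2 * (n + 1))).succAbove j) : Fin (2 * (n + 1))) : ℕ)
            = 2 * n + 1 from by rw [hval1, if_neg hj]; omega),
          if_pos (show (j : ℕ) = ((⟨2 * n, h2n⟩ : Fin (2 * n + 1)) : ℕ) from hj2)]
      · rw [if_neg (show ¬((((⟨n, hn⟩ : Fin (2 * (n + 1))).succAbove j) : Fin (2 * (n + 1))) : ℕ)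
            = 2 * n + 1 from by rw [hval1, if_neg hj]; omega),
          if_neg (show ¬(j : ℕ) = ((⟨2 * n, h2n⟩ : Fin (2 * n + 1)) : ℕ) from hj2)]
  rw [show ((M2mat a b c d t n (Fin.cons t (Fin.cons (-t) x))).submatrix Fin.succ
          (⟨n, hn⟩ : Fin (2 * (n + 1))).succAbove).det
      = (-1) ^ (2 * n) * (1 + a * b * c * d * t ^ 4) ^ n *
        (((M2mat a b c d t n (Fin.cons t (Fin.cons (-t) x))).submatrix Fin.succ
          (⟨n, hn⟩ : Fin (2 * (n + 1))).succAbove).submatrix Fin.succ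
          (⟨2 * n, h2n⟩ : Fin (2 * n + 1)).succAbove).det
      from det_single_row _ _ _ h2]
  have hC : ((M2mat a b c d t n (Fin.cons t (Fin.cons (-t) x))).submatrix Fin.succ
        (⟨n, hn⟩ : Fin (2 * (n + 1))).succAbove).submatrix Fin.succ
        (⟨2 * n, h2n⟩ : Fin (2 * n + 1)).succAbove
      = Matrix.of (fun k j => ((x k ^ 2 - t ^ 2) * (1 - a * b * c * d * t ^ 2 * x k ^ 2)) *
          fMat a b c d n x k j) := by
    ext k j
    rw [Matrix.submatrix_apply, Matrix.submatrix_apply, Matrix.of_apply]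
    have hrowv : ((Fin.succ (Fin.succ k) : Fin (2 * (n + 1))) : ℕ) = (k : ℕ) + 2 := by
      simp [Fin.val_succ]
    have hz : (Fin.cons t (Fin.cons (-t) x) : Fin (2 * (n + 1)) → R)
        (Fin.succ (Fin.succ k)) = x k := by
      rw [Fin.cons_succ, Fin.cons_succ]
    have hcolv : ((((⟨n, hn⟩ : Fin (2 * (n + 1))).succAbove
        ((⟨2 * n, h2n⟩ : Fin (2 * n + 1)).succAbove j)) : Fin (2 * (n + 1))) : ℕ)
        = if (j : ℕ) < n then (j : ℕ) else (j : ℕ) + 1 := by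
      rw [hval1, hval2]
    unfold M2mat fMat
    simp only [Matrix.of_apply, hrowv, hz, hcolv]
    rw [if_neg (by omega), if_neg (by omega)]
    have hj2n : (j : ℕ) < 2 * n := j.isLt
    by_cases hjn : (j : ℕ) < n
    · simp only [if_pos hjn]
      ring
    · simp only [if_neg hjn]
      rw [if_neg (show ¬(j : ℕ) + 1 < n by omega), if_neg (show ¬(j : ℕ) + 1 = n by omega),
        if_neg (show ¬(j : ℕ) + 1 = 2 * n + 1 by omega),
        show 2 * n - ((j : ℕ) + 1) = 2 * n - 1 - (j : ℕ) by omega,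
        show (j : ℕ) + 1 - (n + 1) = (j : ℕ) - n by omega]
      ring
  have hdet : (((M2mat a b c d t n (Fin.cons t (Fin.cons (-t) x))).submatrix Fin.succ
        (⟨n, hn⟩ : Fin (2 * (n + 1))).succAbove).submatrix Fin.succ
        (⟨2 * n, h2n⟩ : Fin (2 * n + 1)).succAbove).det
      = (∏ i : Fin (2 * n), ((x i ^ 2 - t ^ 2) * (1 - a * b * c * d * t ^ 2 * x i ^ 2))) *
        (fMat a b c d n x).det := by
    rw [hC]
    exact Matrix.det_mul_column _ _
  rw [hdet, ← fDet_eq]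
  rw [show ((-1 : R)) ^ (2 * n) = 1 from by rw [pow_mul]; norm_num,
    show ((1 : R) + a * b * c * d * t ^ 4) ^ (2 * n)
      = (1 + a * b * c * d * t ^ 4) ^ n * (1 + a * b * c * d * t ^ 4) ^ n
      from by rw [← pow_add]; congr 1; omega]
  ring
end step4


section assemble
variable {R : Type*} [CommRing R]

lemma key (a b c d t : R) (n : ℕ) (x : Fin (2 * n) → R) :
    (1 + a * b * c * d * t ^ 4) ^ (2 * n) *
        fDet a b c d (n + 1) (Fin.cons t (Fin.cons (-t) x)) =
      (1 + a * b * c * d * t ^ 4) ^ (2 * n) *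
        ((-1) ^ n * (2 * t * (1 - a * b * t ^ 2) * (1 - a * c * t ^ 2)) *
          (∏ i : Fin (2 * n), (t ^ 2 - x i ^ 2)) *
          (∏ i : Fin (2 * n), (1 - a * b * c * d * t ^ 2 * x i ^ 2)) *
          fDet a b c d n x) := by
  have h3 : (M1mat a b c d t n x).det * (1 + a * b * c * d * t ^ 4) ^ (2 * n)
      = (M2mat a b c d t n (Fin.cons t (Fin.cons (-t) x))).det := by
    rw [← det_Umat t (1 + a * b * c * d * t ^ 4) n, ← Matrix.det_mul, step3]
  have h4 := step4 a b c d t n x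
  have hG : (∏ i : Fin (2 * n), ((x i ^ 2 - t ^ 2) * (1 - a * b * c * d * t ^ 2 * x i ^ 2)))
      = (∏ i : Fin (2 * n), (t ^ 2 - x i ^ 2)) *
        (∏ i : Fin (2 * n), (1 - a * b * c * d * t ^ 2 * x i ^ 2)) := by
    rw [Finset.prod_congr rfl (fun i _ => show (x i ^ 2 - t ^ 2) *
        (1 - a * b * c * d * t ^ 2 * x i ^ 2)
        = (-1) * ((t ^ 2 - x i ^ 2) * (1 - a * b * c * d * t ^ 2 * x i ^ 2)) from by ring),
      Finset.prod_mul_distrib, Finset.prod_mul_distrib, Finset.prod_const, Finset.card_univ,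
      Fintype.card_fin, show ((-1 : R)) ^ (2 * n) = 1 from by rw [pow_mul]; norm_num, one_mul]
  rw [step1, show (1 + a * b * c * d * t ^ 4) ^ (2 * n) *
      (2 * t * (1 - a * b * t ^ 2) * (1 - a * c * t ^ 2) * (M1mat a b c d t n x).det)
      = 2 * t * (1 - a * b * t ^ 2) * (1 - a * c * t ^ 2) *
        ((M1mat a b c d t n x).det * (1 + a * b * c * d * t ^ 4) ^ (2 * n)) from by ring,
    h3, h4, hG]
  ring

lemma fDet_map {S : Type*} [CommRing S] (φ : R →+* S) (a b c d : R) (m : ℕ)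
    (x : Fin (2 * m) → R) :
    φ (fDet a b c d m x) = fDet (φ a) (φ b) (φ c) (φ d) m (fun i => φ (x i)) := by
  rw [fDet_eq, fDet_eq, RingHom.map_det]
  congr 1
  ext i j
  simp only [RingHom.mapMatrix_apply, Matrix.map_apply, fMat, Matrix.of_apply, apply_ite φ, map_mul, map_pow, map_add,
    map_sub, map_one]

lemma key_domain (n : ℕ) :
    ∀ (a b c d t : MvPolynomial (Fin (2 * n) ⊕ Fin 5) ℤ)
      (x : Fin (2 * n) → MvPolynomial (Fin (2 * n) ⊕ Fin 5) ℤ),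
      (1 + a * b * c * d * t ^ 4) ≠ 0 →
      fDet a b c d (n + 1) (Fin.cons t (Fin.cons (-t) x)) =
        (-1) ^ n * (2 * t * (1 - a * b * t ^ 2) * (1 - a * c * t ^ 2)) *
          (∏ i : Fin (2 * n), (t ^ 2 - x i ^ 2)) *
          (∏ i : Fin (2 * n), (1 - a * b * c * d * t ^ 2 * x i ^ 2)) *
          fDet a b c d n x := by
  intro a b c d t x hT
  exact mul_left_cancel₀ (pow_ne_zero (2 * n) hT) (key a b c d t n x)
end assemble

/-- Proposition `prop:numer`:
`f_{n+1}(t, −t, x₁,…,x_{2n}) = (−1)ⁿ · 2t(1−abt²)(1−act²) · Π(t² − x_i²) ·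
  Π(1 − abcd t² x_i²) · f_n(x₁,…,x_{2n})`. -/
theorem fDet_specialize (R : Type*) [CommRing R] (a b c d t : R) (n : ℕ)
    (x : Fin (2 * n) → R) :
    fDet a b c d (n + 1) (Fin.cons t (Fin.cons (-t) x)) =
      (-1) ^ n * (2 * t * (1 - a * b * t ^ 2) * (1 - a * c * t ^ 2)) *
        (∏ i : Fin (2 * n), (t ^ 2 - x i ^ 2)) *
        (∏ i : Fin (2 * n), (1 - a * b * c * d * t ^ 2 * x i ^ 2)) *
        fDet a b c d n x := by
  have hT : (1 + (MvPolynomial.X (Sum.inr 0) : MvPolynomial (Fin (2 * n) ⊕ Fin 5) ℤ) *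
      MvPolynomial.X (Sum.inr 1) * MvPolynomial.X (Sum.inr 2) * MvPolynomial.X (Sum.inr 3) *
      MvPolynomial.X (Sum.inr 4) ^ 4) ≠ 0 := by
    intro h
    have h2 := congrArg MvPolynomial.constantCoeff h
    simp only [map_add, map_mul, map_pow, map_one, map_zero,
      MvPolynomial.constantCoeff_X] at h2
    norm_num at h2
  have hdom := key_domain n (MvPolynomial.X (Sum.inr 0)) (MvPolynomial.X (Sum.inr 1))
    (MvPolynomial.X (Sum.inr 2)) (MvPolynomial.X (Sum.inr 3)) (MvPolynomial.X (Sum.inr 4))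
    (fun i => MvPolynomial.X (Sum.inl i)) hT
  set φ : MvPolynomial (Fin (2 * n) ⊕ Fin 5) ℤ →+* R :=
    (MvPolynomial.eval₂Hom (Int.castRingHom R) (Sum.elim x ![a, b, c, d, t])) with hφ
  have hmain := congrArg φ hdom
  rw [fDet_map] at hmain
  have hφr : ∀ k : Fin 5, φ (MvPolynomial.X (Sum.inr k)) = ![a, b, c, d, t] k := by
    intro k; simp [hφ]
  have hφa := hφr 0; have hφb := hφr 1; have hφc := hφr 2; have hφd := hφr 3
  have hφt := hφr 4
  simp only [Matrix.cons_val_zero, Matrix.cons_val_one, Matrix.head_cons,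
    Matrix.cons_val_two, Matrix.tail_cons, Matrix.cons_val_three,
    Matrix.cons_val_four] at hφa hφb hφc hφd hφt
  have hφX : ∀ i : Fin (2 * n), φ (MvPolynomial.X (Sum.inl i)) = x i := by
    intro i; simp [hφ]
  have hcons : (fun i => φ ((Fin.cons (MvPolynomial.X (Sum.inr 4))
        (Fin.cons (-MvPolynomial.X (Sum.inr 4)) (fun i => MvPolynomial.X (Sum.inl i))) :
        Fin (2 * (n + 1)) → MvPolynomial (Fin (2 * n) ⊕ Fin 5) ℤ) i))
      = (Fin.cons t (Fin.cons (-t) x) : Fin (2 * (n + 1)) → R) := by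
    funext i
    induction i using Fin.cases with
    | zero => rw [Fin.cons_zero, Fin.cons_zero, hφt]
    | succ i' =>
      rw [Fin.cons_succ, Fin.cons_succ]
      induction i' using Fin.cases with
      | zero => rw [Fin.cons_zero, Fin.cons_zero, map_neg, hφt]
      | succ i'' => rw [Fin.cons_succ, Fin.cons_succ, hφX]
  simp only [map_mul, map_pow, map_neg, map_one, map_sub, map_prod, map_ofNat, fDet_map,
    hφa, hφb, hφc, hφd, hφt, hφX] at hmain
  rw [← hcons]
  exact hmain
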